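/- Let S be a finite family of entrywise nonnegative matrices in ℝ^{n×n} with probability weights μ : S → [0,1], ∑ μ = 1, let L ≥ 1, and let π be a probability weight function on pairs (A, D), where A ∈ S and D is a delay matrix with entries in {0,…,L}, satisfying ∑_D π(A, D) = μ(A) for each A ∈ S. Then ρ(E_π[S_L]) < 1 if and only if ρ(E_μ[S]) < 1, where E_π[S_L] = ∑_{A∈S} ∑_D π(A,D) · A_D and E_μ[S] = ∑_{A∈S} μ(A) A. -/

import Mathlib

open Matrix BigOperators
open scoped NNReal ENNReal

attribute [local instance] Matrix.linftyOpNormedRing Matrix.linftyOpNormedAlgebra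
  Matrix.linfty_opNormOneClass

/-- The spectral radius of a real square matrix: the maximum modulus of its
complex eigenvalues. -/
noncomputable def specRad {m : Type*} [Fintype m] [DecidableEq m]
    (A : Matrix m m ℝ) : ℝ :=
  (spectralRadius ℂ (A.map (algebraMap ℝ ℂ))).toReal

lemma eig_of_mem_spectrum {m : Type*} [Fintype m] [DecidableEq m]
    (M : Matrix m m ℂ) {lam : ℂ}
    (h : lam ∈ spectrum ℂ M) : ∃ x : m → ℂ, x ≠ 0 ∧ M *ᵥ x = lam • x := by
  rw [spectrum.mem_iff] at h
  rw [Matrix.isUnit_iff_isUnit_det, isUnit_iff_ne_zero, not_ne_iff] at h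
  obtain ⟨x, hx0, hx⟩ := (Matrix.exists_mulVec_eq_zero_iff).mpr h
  refine ⟨x, hx0, ?_⟩
  rw [Algebra.algebraMap_eq_smul_one, Matrix.sub_mulVec, Matrix.smul_mulVec,
    Matrix.one_mulVec, sub_eq_zero] at hx
  exact hx.symm

lemma specRad_lt_one_of_exists {m : Type*} [Fintype m] [DecidableEq m]
    (N : Matrix m m ℝ)
    (hN : ∀ i j, 0 ≤ N i j) (v : m → ℝ) (hv : ∀ i, 0 < v i)
    (hlt : ∀ i, (N *ᵥ v) i < v i) : specRad N < 1 := by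
  set Nc := N.map (algebraMap ℝ ℂ) with hNc
  have key : ∀ lam ∈ spectrum ℂ Nc, ‖lam‖₊ < 1 := by
    intro lam hlam
    obtain ⟨x, hx0, hx⟩ := eig_of_mem_spectrum Nc hlam
    set y : m → ℝ := fun i => ‖x i‖ with hy
    obtain ⟨j0, hj0⟩ := Function.ne_iff.mp hx0
    simp only [Pi.zero_apply] at hj0
    have hne : (Finset.univ : Finset m).Nonempty := ⟨j0, Finset.mem_univ _⟩
    obtain ⟨i0, -, hi0⟩ := Finset.exists_max_image Finset.univ (fun i => y i / v i) hne
    have hy0 : 0 < y i0 := by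
      have h1 : y j0 / v j0 ≤ y i0 / v i0 := hi0 j0 (Finset.mem_univ _)
      have h2 : 0 < y j0 / v j0 := div_pos (norm_pos_iff.mpr hj0) (hv j0)
      have h3 := h2.trans_le h1
      have h4 := mul_pos h3 (hv i0)
      rwa [div_mul_cancel₀ _ (hv i0).ne'] at h4
    set c : ℝ := y i0 / v i0 with hc
    have hcpos : 0 < c := div_pos hy0 (hv i0)
    have hyle : ∀ j, y j ≤ c * v j := by
      intro j
      have h1 : y j / v j ≤ c := hi0 j (Finset.mem_univ _)
      calc y j = y j / v j * v j := (div_mul_cancel₀ (y j) (hv j).ne').symm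
        _ ≤ c * v j := mul_le_mul_of_nonneg_right h1 (hv j).le
    have hncr : ∀ i j, ‖Nc i j‖ = N i j := by
      intro i j
      simp only [hNc, Matrix.map_apply]
      rw [show (algebraMap ℝ ℂ) (N i j) = ((N i j : ℝ) : ℂ) from rfl]
      rw [Complex.norm_real, Real.norm_eq_abs, abs_of_nonneg (hN i j)]
    have hstep : ‖lam‖ * y i0 < y i0 := by
      have h1 : ‖lam‖ * y i0 ≤ ∑ j, N i0 j * y j := by
        have hxe : (Nc *ᵥ x) i0 = lam * x i0 := by rw [hx]; rfl
        calc ‖lam‖ * y i0 = ‖lam * x i0‖ := by rw [norm_mul]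
          _ = ‖∑ j, Nc i0 j * x j‖ := by rw [← hxe]; rfl
          _ ≤ ∑ j, ‖Nc i0 j * x j‖ := norm_sum_le _ _
          _ = ∑ j, N i0 j * y j := by
              refine Finset.sum_congr rfl fun j _ => ?_
              rw [norm_mul, hncr]
      have h2 : ∑ j, N i0 j * y j ≤ c * (N *ᵥ v) i0 := by
        rw [Matrix.mulVec, dotProduct, Finset.mul_sum]
        refine Finset.sum_le_sum fun j _ => ?_
        calc N i0 j * y j ≤ N i0 j * (c * v j) :=
              mul_le_mul_of_nonneg_left (hyle j) (hN i0 j)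
          _ = c * (N i0 j * v j) := by ring
      have h3 : c * (N *ᵥ v) i0 < c * v i0 := mul_lt_mul_of_pos_left (hlt i0) hcpos
      have h4 : c * v i0 = y i0 := by rw [hc]; exact div_mul_cancel₀ _ (hv i0).ne'
      linarith
    have hlt1 : ‖lam‖ < 1 := (mul_lt_iff_lt_one_left hy0).mp hstep
    exact_mod_cast hlt1
  by_cases hs : (spectrum ℂ Nc).Nonempty
  · have h1 : spectralRadius ℂ Nc < (1 : ℝ≥0) :=
      spectrum.spectralRadius_lt_of_forall_lt_of_nonempty hs key
    have h2 : spectralRadius ℂ Nc < 1 := by exact_mod_cast h1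
    rw [specRad]
    have := ENNReal.toReal_strict_mono (by simp : (1:ℝ≥0∞) ≠ ⊤) h2
    simpa [hNc] using this
  · rw [Set.not_nonempty_iff_eq_empty] at hs
    rw [specRad, spectralRadius]
    rw [show N.map (algebraMap ℝ ℂ) = Nc from rfl, hs]
    simp

lemma pow_entry_nonneg {m : Type*} [Fintype m] [DecidableEq m] {N : Matrix m m ℝ}
    (hN : ∀ i j, 0 ≤ N i j) : ∀ k i j, 0 ≤ (N ^ k) i j := by
  intro k
  induction k with
  | zero => intro i j; simp [Matrix.one_apply]; split <;> simp
  | succ k ih =>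
    intro i j
    rw [pow_succ, Matrix.mul_apply]
    exact Finset.sum_nonneg fun l _ => mul_nonneg (ih i l) (hN l j)

lemma exists_of_specRad_lt_one {m : Type*} [Fintype m] [DecidableEq m]
    (N : Matrix m m ℝ)
    (hN : ∀ i j, 0 ≤ N i j) (h : specRad N < 1) :
    ∃ v : m → ℝ, (∀ i, 0 < v i) ∧ ∀ i, (N *ᵥ v) i < v i := by
  cases isEmpty_or_nonempty m with
  | inl he => exact ⟨fun _ => 1, fun i => (he.false i).elim, fun i => (he.false i).elim⟩
  | inr hne => ?_
  set Nc := N.map (algebraMap ℝ ℂ) with hNc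
  have hfin : spectralRadius ℂ Nc ≠ ⊤ :=
    ((spectrum.spectralRadius_le_nnnorm (𝕜 := ℂ) Nc).trans_lt ENNReal.coe_lt_top).ne
  have ht : spectralRadius ℂ Nc < 1 := by
    rw [specRad] at h
    exact (ENNReal.toReal_lt_toReal hfin ENNReal.one_ne_top).mp (by simpa [hNc] using h)
  obtain ⟨r, hr1, hr2⟩ := ENNReal.lt_iff_exists_nnreal_btwn.mp ht
  have hrlt : (r : ℝ) < 1 := by exact_mod_cast hr2
  have hg := spectrum.pow_nnnorm_pow_one_div_tendsto_nhds_spectralRadius Nc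
  have hev := hg.eventually_lt_const hr1
  obtain ⟨K, hK⟩ := Filter.eventually_atTop.mp hev
  have hpow : ∀ k, K + 1 ≤ k → ‖Nc ^ k‖₊ < r ^ k := by
    intro k hk
    have hk0 : (k : ℝ) ≠ 0 := by
      have : k ≠ 0 := by omega
      exact_mod_cast this
    have h1 : ((‖Nc ^ k‖₊ : ℝ≥0∞) ^ (1 / (k : ℝ))) < r := hK k (by omega)
    have h2 := ENNReal.pow_lt_pow_left (n := k) (by omega) h1
    rw [← ENNReal.rpow_natCast _ k, ← ENNReal.rpow_mul, one_div,
      inv_mul_cancel₀ hk0, ENNReal.rpow_one] at h2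
    exact_mod_cast h2
  have hnorm : ∀ k, K + 1 ≤ k → ‖Nc ^ k‖ ≤ (r : ℝ) ^ k := by
    intro k hk
    have := (hpow k hk).le
    exact_mod_cast this
  have hsum : Summable fun k => ‖Nc ^ k‖ := by
    have hgeo : Summable fun k : ℕ => (r : ℝ) ^ (k + (K + 1)) := by
      have := (summable_geometric_of_lt_one r.coe_nonneg hrlt).mul_right ((r : ℝ) ^ (K + 1))
      simpa [pow_add] using this
    have h2 : Summable fun k : ℕ => ‖Nc ^ (k + (K + 1))‖ :=
      Summable.of_nonneg_of_le (fun k => norm_nonneg _)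
        (fun k => hnorm _ (by omega)) hgeo
    exact (summable_nat_add_iff (K + 1)).mp h2
  -- the vector
  have hmap : ∀ k : ℕ, Nc ^ k = (N ^ k).map (algebraMap ℝ ℂ) := by
    intro k
    rw [hNc]
    have := map_pow ((algebraMap ℝ ℂ).mapMatrix) N k
    simpa [RingHom.mapMatrix_apply] using this.symm
  set w : ℕ → m → ℝ := fun k => (N ^ k) *ᵥ (fun _ => 1) with hw
  have hw0 : ∀ k i, 0 ≤ w k i := by
    intro k i
    simp only [hw, Matrix.mulVec, dotProduct]
    exact Finset.sum_nonneg fun j _ => mul_nonneg (pow_entry_nonneg hN k i j) zero_le_one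
  have hwbound : ∀ k i, w k i ≤ ‖Nc ^ k‖ := by
    intro k i
    have h3 : (Nc ^ k *ᵥ fun _ : m => (1 : ℂ)) i = ((w k i : ℝ) : ℂ) := by
      rw [hmap k]
      simp [Matrix.mulVec, dotProduct, hw, Matrix.map_apply]
    have h1 : ‖(Nc ^ k *ᵥ fun _ : m => (1 : ℂ)) i‖ ≤ ‖Nc ^ k *ᵥ fun _ => (1 : ℂ)‖ :=
      norm_le_pi_norm _ i
    have h2 : ‖Nc ^ k *ᵥ fun _ => (1 : ℂ)‖ ≤ ‖Nc ^ k‖ * ‖fun _ : m => (1 : ℂ)‖ :=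
      Matrix.linfty_opNorm_mulVec _ _
    rw [h3] at h1
    rw [Complex.norm_real, Real.norm_eq_abs, abs_of_nonneg (hw0 k i)] at h1
    have h4 : ‖fun _ : m => (1 : ℂ)‖ = 1 := by
      rw [pi_norm_const]; simp
    rw [h4, mul_one] at h2
    exact h1.trans h2
  have hsummable : ∀ i, Summable fun k => w k i := fun i =>
    Summable.of_nonneg_of_le (fun k => hw0 k i) (fun k => hwbound k i) hsum
  refine ⟨fun i => ∑' k, w k i, ?_, ?_⟩
  · intro i
    have hle : w 0 i ≤ ∑' k, w k i := Summable.le_tsum (hsummable i) 0 fun b _ => hw0 b i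
    have hw00 : w 0 i = 1 := by simp [hw, Matrix.one_mulVec]
    linarith
  · intro i
    have key : (N *ᵥ fun j => ∑' k, w k j) i = ∑' k, w (k + 1) i := by
      rw [Matrix.mulVec, dotProduct]
      have h1 : ∀ j, N i j * ∑' k, w k j = ∑' k, N i j * w k j := fun j =>
        (tsum_mul_left).symm
      simp_rw [h1]
      rw [← Summable.tsum_finsetSum (fun j _ => (hsummable j).mul_left (N i j))]
      congr 1
      funext k
      have : ∑ j, N i j * w k j = (N *ᵥ w k) i := by
        rw [Matrix.mulVec, dotProduct]
      rw [this, hw]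
      simp only []
      rw [Matrix.mulVec_mulVec, ← pow_succ']
    have hdec : ∑' k, w k i = w 0 i + ∑' k, w (k + 1) i :=
      Summable.tsum_eq_zero_add (hsummable i)
    have hw00 : w 0 i = 1 := by simp [hw, Matrix.one_mulVec]
    rw [key]
    have hpos : (0:ℝ) < 1 := one_pos
    rw [hw00] at hdec
    linarith [hdec]


/-- The delayed matrix `A_D` of a matrix `A` with delay matrix `D`:
`(A_D)_{(i,0),(j,m)} = A i j` if `D i j = m` and `0` otherwise,
`(A_D)_{(i,ℓ+1),(j,ℓ)} = 1` if `i = j` and `0` otherwise, all other entries zero. -/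
def delayedMatrix {n L : ℕ} (A : Matrix (Fin n) (Fin n) ℝ)
    (D : Fin n → Fin n → Fin (L + 1)) :
    Matrix (Fin n × Fin (L + 1)) (Fin n × Fin (L + 1)) ℝ :=
  fun p q =>
    if (p.2 : ℕ) = 0 then (if D p.1 q.1 = q.2 then A p.1 q.1 else 0)
    else if p.1 = q.1 ∧ (q.2 : ℕ) + 1 = (p.2 : ℕ) then 1 else 0

lemma delayedMatrix_apply {n L : ℕ} (A : Matrix (Fin n) (Fin n) ℝ)
    (D : Fin n → Fin n → Fin (L + 1)) (i j : Fin n) (l m : Fin (L + 1)) :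
    delayedMatrix A D (i, l) (j, m) =
      if (l : ℕ) = 0 then (if D i j = m then A i j else 0)
      else if i = j ∧ (m : ℕ) + 1 = (l : ℕ) then 1 else 0 := rfl

lemma delayedMatrix_nonneg {n L : ℕ} {A : Matrix (Fin n) (Fin n) ℝ}
    (hA : ∀ i j, 0 ≤ A i j) (D : Fin n → Fin n → Fin (L + 1)) (p q) :
    0 ≤ delayedMatrix A D p q := by
  unfold delayedMatrix
  split_ifs <;> first | exact hA _ _ | norm_num

lemma sum_mulVec_apply {κ : Type*} [Fintype κ] {m : Type*} [Fintype m]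
    (C : κ → Matrix m m ℝ) (u : m → ℝ) (p : m) :
    ((∑ x, C x) *ᵥ u) p = ∑ x, (C x *ᵥ u) p := by
  simp only [Matrix.mulVec, dotProduct, Matrix.sum_apply, Finset.sum_mul]
  exact Finset.sum_comm

lemma dm_mulVec_zero {n L : ℕ} (A : Matrix (Fin n) (Fin n) ℝ)
    (D : Fin n → Fin n → Fin (L + 1)) (u : Fin n × Fin (L + 1) → ℝ)
    (i : Fin n) (l : Fin (L + 1)) (hl : (l : ℕ) = 0) :
    (delayedMatrix A D *ᵥ u) (i, l) = ∑ j, A i j * u (j, D i j) := by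
  rw [Matrix.mulVec, dotProduct, Fintype.sum_prod_type]
  refine Finset.sum_congr rfl fun j _ => ?_
  simp only [delayedMatrix_apply, hl, if_true, ite_mul, zero_mul]
  rw [Finset.sum_ite_eq]
  simp

lemma dm_mulVec_succ {n L : ℕ} (A : Matrix (Fin n) (Fin n) ℝ)
    (D : Fin n → Fin n → Fin (L + 1)) (u : Fin n × Fin (L + 1) → ℝ)
    (i : Fin n) (l : Fin (L + 1)) (k : ℕ) (hk : k < L + 1) (hl : (l : ℕ) = k + 1) :
    (delayedMatrix A D *ᵥ u) (i, l) = u (i, ⟨k, hk⟩) := by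
  rw [Matrix.mulVec, dotProduct]
  rw [Fintype.sum_eq_single ((i, ⟨k, hk⟩) : Fin n × Fin (L + 1))]
  · rw [delayedMatrix_apply, if_neg (by omega), if_pos ⟨rfl, by simp [hl]⟩, one_mul]
  · rintro ⟨j, mm⟩ hq
    rw [delayedMatrix_apply, if_neg (by omega), if_neg, zero_mul]
    rintro ⟨h1, h2⟩
    apply hq
    have hmm : mm = ⟨k, hk⟩ := by
      apply Fin.ext
      simp only []
      omega
    rw [← h1, hmm]

theorem stmt12 {n L : ℕ} (hL : 1 ≤ L) {ι : Type*} [Fintype ι]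
    (A : ι → Matrix (Fin n) (Fin n) ℝ) (hA : ∀ f i j, 0 ≤ A f i j)
    (μ : ι → ℝ) (hμ0 : ∀ f, 0 ≤ μ f) (hμ1 : ∑ f, μ f = 1)
    (π : ι → (Fin n → Fin n → Fin (L + 1)) → ℝ)
    (hπ0 : ∀ f D, 0 ≤ π f D)
    (hπμ : ∀ f, ∑ D : Fin n → Fin n → Fin (L + 1), π f D = μ f) :
    specRad (∑ f, ∑ D : Fin n → Fin n → Fin (L + 1),
        π f D • delayedMatrix (A f) D) < 1 ↔
      specRad (∑ f, μ f • A f) < 1 := by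

  classical
  set M := ∑ f, ∑ D : Fin n → Fin n → Fin (L + 1), π f D • delayedMatrix (A f) D with hM
  set B := ∑ f, μ f • A f with hB
  have hBnn : ∀ i j, 0 ≤ B i j := by
    intro i j
    rw [hB]
    simp only [Matrix.sum_apply, Matrix.smul_apply, smul_eq_mul]
    exact Finset.sum_nonneg fun f _ => mul_nonneg (hμ0 f) (hA f i j)
  have hMnn : ∀ p q, 0 ≤ M p q := by
    intro p q
    rw [hM]
    simp only [Matrix.sum_apply, Matrix.smul_apply, smul_eq_mul]
    exact Finset.sum_nonneg fun f _ => Finset.sum_nonneg fun D _ =>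
      mul_nonneg (hπ0 f D) (delayedMatrix_nonneg (hA f) D p q)
  -- decomposition of M *ᵥ u
  have hMdec : ∀ (u : Fin n × Fin (L + 1) → ℝ) p,
      (M *ᵥ u) p = ∑ f, ∑ D, π f D * ((delayedMatrix (A f) D *ᵥ u) p) := by
    intro u p
    rw [hM, sum_mulVec_apply]
    refine Finset.sum_congr rfl fun f _ => ?_
    rw [sum_mulVec_apply]
    refine Finset.sum_congr rfl fun D _ => ?_
    rw [Matrix.smul_mulVec, Pi.smul_apply, smul_eq_mul]
  have hBrow : ∀ (u : Fin n → ℝ) i, (B *ᵥ u) i = ∑ f, μ f * ∑ j, A f i j * u j := by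
    intro u i
    rw [hB, sum_mulVec_apply]
    refine Finset.sum_congr rfl fun f _ => ?_
    rw [Matrix.smul_mulVec, Pi.smul_apply, smul_eq_mul, Matrix.mulVec, dotProduct]
  -- rows of M
  have hMrow0 : ∀ (u : Fin n × Fin (L + 1) → ℝ) i (l : Fin (L + 1)), (l : ℕ) = 0 →
      (M *ᵥ u) (i, l) = ∑ f, ∑ D, π f D * ∑ j, A f i j * u (j, D i j) := by
    intro u i l hl
    rw [hMdec]
    exact Finset.sum_congr rfl fun f _ => Finset.sum_congr rfl fun D _ => by
      rw [dm_mulVec_zero _ _ _ _ _ hl]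
  have hMrowS : ∀ (u : Fin n × Fin (L + 1) → ℝ) i (l : Fin (L + 1)) k (hk : k < L + 1),
      (l : ℕ) = k + 1 → (M *ᵥ u) (i, l) = u (i, ⟨k, hk⟩) := by
    intro u i l k hk hl
    rw [hMdec]
    have : ∀ f, ∑ D, π f D * ((delayedMatrix (A f) D *ᵥ u) (i, l))
        = μ f * u (i, ⟨k, hk⟩) := by
      intro f
      rw [← hπμ f, Finset.sum_mul]
      exact Finset.sum_congr rfl fun D _ => by
        rw [dm_mulVec_succ _ _ _ _ _ k hk hl]
    simp_rw [this]
    rw [← Finset.sum_mul, hμ1, one_mul]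
  constructor
  · -- delayed ⇒ average
    intro hMlt
    obtain ⟨w, hw, hwlt⟩ := exists_of_specRad_lt_one M hMnn hMlt
    have hzero : ((0 : Fin (L + 1)) : ℕ) = 0 := rfl
    -- monotonicity in the layer
    have hmono : ∀ i (m : Fin (L + 1)), w (i, 0) ≤ w (i, m) := by
      intro i m
      have key : ∀ k (hk : k < L + 1), w (i, 0) ≤ w (i, ⟨k, hk⟩) := by
        intro k
        induction k with
        | zero =>
          intro hk
          have : (⟨0, hk⟩ : Fin (L + 1)) = 0 := by ext; simp
          rw [this]
        | succ k ih =>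
          intro hk
          have hk' : k < L + 1 := by omega
          have h1 := hwlt (i, ⟨k + 1, hk⟩)
          rw [hMrowS w i _ k hk' (by simp)] at h1
          exact (ih hk').trans h1.le
      have := key (m : ℕ) m.isLt
      simpa using this
    refine specRad_lt_one_of_exists B hBnn (fun i => w (i, 0)) (fun i => hw _) ?_
    intro i
    have h0 := hwlt (i, 0)
    rw [hMrow0 w i 0 hzero] at h0
    refine lt_of_le_of_lt ?_ h0
    rw [hBrow]
    refine Finset.sum_le_sum fun f _ => ?_
    rw [← hπμ f, Finset.sum_mul]
    refine Finset.sum_le_sum fun D _ => ?_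
    refine mul_le_mul_of_nonneg_left ?_ (hπ0 f D)
    exact Finset.sum_le_sum fun j _ =>
      mul_le_mul_of_nonneg_left (hmono j (D i j)) (hA f i j)
  · -- average ⇒ delayed
    intro hBlt
    obtain ⟨v, hv, hvlt⟩ := exists_of_specRad_lt_one B hBnn hBlt
    rcases Nat.eq_zero_or_pos n with hn | hn
    · subst hn
      refine specRad_lt_one_of_exists M hMnn (fun _ => 1) (fun p => one_pos) ?_
      intro p
      exact p.1.elim0
    haveI : Nonempty (Fin n) := ⟨⟨0, hn⟩⟩
    set one : Fin n → ℝ := fun _ => 1 with hone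
    have hB1nn : ∀ i, 0 ≤ (B *ᵥ one) i := by
      intro i
      simp only [Matrix.mulVec, dotProduct, hone]
      exact Finset.sum_nonneg fun j _ => mul_nonneg (hBnn i j) zero_le_one
    set g : Fin n → ℝ := fun i => (v i - (B *ᵥ v) i) / ((L : ℝ) * (B *ᵥ one) i + 1) with hg
    have hgpos : ∀ i, 0 < g i := by
      intro i
      apply div_pos (by linarith [hvlt i])
      have := hB1nn i
      positivity
    obtain ⟨i0, -, hi0⟩ := Finset.exists_min_image Finset.univ g ⟨⟨0, hn⟩, Finset.mem_univ _⟩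
    set ε : ℝ := g i0 with hε
    have hεpos : 0 < ε := hgpos i0
    have hεle : ∀ i, (B *ᵥ v) i + (L : ℝ) * ε * (B *ᵥ one) i < v i := by
      intro i
      have h1 : ε ≤ g i := hi0 i (Finset.mem_univ _)
      have hd : 0 < (L : ℝ) * (B *ᵥ one) i + 1 := by
        have := hB1nn i
        positivity
      have h2 : ε * ((L : ℝ) * (B *ᵥ one) i + 1) ≤ v i - (B *ᵥ v) i := by
        rw [← le_div_iff₀ hd]
        exact h1.trans_eq rfl
      nlinarith [hεpos]
    set w : Fin n × Fin (L + 1) → ℝ := fun p => v p.1 + (p.2 : ℕ) * ε with hwdef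
    refine specRad_lt_one_of_exists M hMnn w ?_ ?_
    · intro p
      have : (0 : ℝ) ≤ (p.2 : ℕ) * ε := mul_nonneg (Nat.cast_nonneg _) hεpos.le
      have := hv p.1
      simp only [hwdef]
      linarith
    · rintro ⟨i, l⟩
      rcases Nat.eq_zero_or_pos (l : ℕ) with hl | hl
      · -- row 0
        rw [hMrow0 w i l hl]
        have hwl : w (i, l) = v i := by simp [hwdef, hl]
        rw [hwl]
        set u : Fin n → ℝ := fun j => v j + (L : ℝ) * ε with hu
        have step1 : ∑ f, ∑ D, π f D * ∑ j, A f i j * w (j, D i j)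
            ≤ ∑ f, μ f * ∑ j, A f i j * u j := by
          refine Finset.sum_le_sum fun f _ => ?_
          rw [← hπμ f, Finset.sum_mul]
          refine Finset.sum_le_sum fun D _ => ?_
          refine mul_le_mul_of_nonneg_left ?_ (hπ0 f D)
          refine Finset.sum_le_sum fun j _ => ?_
          refine mul_le_mul_of_nonneg_left ?_ (hA f i j)
          have hDle : ((D i j : Fin (L+1)) : ℕ) ≤ L := by omega
          simp only [hwdef, hu]
          have : ((D i j : Fin (L+1)) : ℕ) * ε ≤ (L : ℝ) * ε := by
            apply mul_le_mul_of_nonneg_right _ hεpos.le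
            exact_mod_cast hDle
          linarith
        have step2 : ∑ f, μ f * ∑ j, A f i j * u j = (B *ᵥ u) i := (hBrow u i).symm
        have step3 : (B *ᵥ u) i = (B *ᵥ v) i + (L : ℝ) * ε * (B *ᵥ one) i := by
          have : u = v + ((L : ℝ) * ε) • one := by
            funext j
            simp [hu, hone, mul_comm]
          rw [this, Matrix.mulVec_add, Matrix.mulVec_smul]
          simp
        calc ∑ f, ∑ D, π f D * ∑ j, A f i j * w (j, D i j)
            ≤ ∑ f, μ f * ∑ j, A f i j * u j := step1
          _ = (B *ᵥ u) i := step2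
          _ = (B *ᵥ v) i + (L : ℝ) * ε * (B *ᵥ one) i := step3
          _ < v i := hεle i
      · -- successor rows
        obtain ⟨k, hk⟩ : ∃ k, (l : ℕ) = k + 1 := ⟨(l : ℕ) - 1, by omega⟩
        have hk' : k < L + 1 := by omega
        rw [hMrowS w i l k hk' hk]
        simp only [hwdef, hk]
        have : (k : ℝ) * ε < ((k : ℕ) + 1 : ℕ) * ε := by
          push_cast
          nlinarith [hεpos]
        push_cast
        push_cast at this
        linarith
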